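/- Let H_β(x) = (1/2)(1 + tanh(βx)). For any a < 0 < b, the cell average (1/(b−a))∫_a^b H_β(x) dx converges as β → ∞ to b/(b − a), the exact volume fraction of {x > 0} in [a,b], and the error is bounded by (ln 2)/(β(b−a)). -/

import Mathlib

open Filter Topology intervalIntegral

lemma log_cosh_bounds {t : ℝ} (ht : 0 ≤ t) :
    t - Real.log 2 ≤ Real.log (Real.cosh t) ∧ Real.log (Real.cosh t) ≤ t := by
  have h1 : Real.exp t / 2 ≤ Real.cosh t := by
    rw [Real.cosh_eq]
    have := (Real.exp_pos (-t)).le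
    linarith
  have h2 : Real.cosh t ≤ Real.exp t := by
    rw [Real.cosh_eq]
    have h3 : Real.exp (-t) ≤ Real.exp t := Real.exp_le_exp.2 (by linarith)
    linarith
  have e1 : Real.log (Real.exp t / 2) = t - Real.log 2 := by
    rw [Real.log_div (Real.exp_ne_zero t) two_ne_zero, Real.log_exp]
  have e2 : Real.log (Real.exp t / 2) ≤ Real.log (Real.cosh t) :=
    Real.log_le_log (by positivity) h1
  have e3 : Real.log (Real.cosh t) ≤ Real.log (Real.exp t) :=
    Real.log_le_log (Real.cosh_pos t) h2
  rw [Real.log_exp] at e3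
  exact ⟨by linarith, e3⟩

lemma thinc_integral (a b β : ℝ) (hβ : 0 < β) :
    (∫ x in a..b, (1 / 2) * (1 + Real.tanh (β * x))) =
      (b/2 + Real.log (Real.cosh (β*b)) / (2*β)) -
      (a/2 + Real.log (Real.cosh (β*a)) / (2*β)) := by
  apply intervalIntegral.integral_eq_sub_of_hasDerivAt
  · intro x hx
    have h1 : HasDerivAt (fun x : ℝ => β * x) β x := by
      simpa using (hasDerivAt_id x).const_mul β
    have h2 : HasDerivAt Real.cosh (Real.sinh (β*x)) (β*x) := Real.hasDerivAt_cosh _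
    have h3 : HasDerivAt (fun x => Real.cosh (β*x)) (Real.sinh (β*x) * β) x := h2.comp x h1
    have h4 : HasDerivAt (fun x => Real.log (Real.cosh (β*x)))
        (Real.sinh (β*x) * β / Real.cosh (β*x)) x := h3.log (Real.cosh_pos _).ne'
    have h5 := ((hasDerivAt_id x).div_const 2).add (h4.div_const (2*β))
    convert h5 using 1
    · rfl
    rw [Real.tanh_eq_sinh_div_cosh]
    have hc := (Real.cosh_pos (β*x)).ne'
    field_simp
  · have hcont : Continuous fun x => (1 / 2) * (1 + Real.tanh (β * x)) := by
      have : Continuous fun x : ℝ => Real.tanh (β * x) := by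
        simp only [Real.tanh_eq_sinh_div_cosh]
        exact (Real.continuous_sinh.comp (continuous_const.mul continuous_id)).div
          (Real.continuous_cosh.comp (continuous_const.mul continuous_id))
          fun x => (Real.cosh_pos _).ne'
      exact continuous_const.mul (continuous_const.add this)
    exact hcont.intervalIntegrable a b

/-- For a < 0 < b, the cell average of the THINC function `H_β(x) = (1/2)(1 + tanh(βx))`
over [a,b] converges as β → ∞ to the exact volume fraction `b/(b−a)` of `{x > 0}`,
with error bounded by `ln 2 / (β(b−a))` for every β > 0. -/
theorem thinc_cell_average_accuracy (a b : ℝ) (ha : a < 0) (hb : 0 < b) :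
    Tendsto (fun β : ℝ =>
        (1 / (b - a)) * ∫ x in a..b, (1 / 2) * (1 + Real.tanh (β * x)))
      atTop (𝓝 (b / (b - a))) ∧
    (∀ β : ℝ, 0 < β →
      |(1 / (b - a)) * (∫ x in a..b, (1 / 2) * (1 + Real.tanh (β * x))) - b / (b - a)| ≤
        Real.log 2 / (β * (b - a))) := by
  have hba : 0 < b - a := by linarith
  have hlog2 : 0 ≤ Real.log 2 := Real.log_nonneg one_le_two
  have key : ∀ β : ℝ, 0 < β →
      |(1 / (b - a)) * (∫ x in a..b, (1 / 2) * (1 + Real.tanh (β * x))) - b / (b - a)| ≤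
        Real.log 2 / (2 * β * (b - a)) := by
    intro β hβ
    rw [thinc_integral a b β hβ]
    have hu := log_cosh_bounds (t := β * b) (by positivity)
    have hv := log_cosh_bounds (t := β * (-a)) (by nlinarith)
    have hca : Real.cosh (β * a) = Real.cosh (β * (-a)) := by
      rw [show β * a = -(β * (-a)) by ring, Real.cosh_neg]
    rw [hca]
    set u := Real.log (Real.cosh (β * b)) with hu'
    set v := Real.log (Real.cosh (β * (-a))) with hv'
    have heq : (1 / (b - a)) * ((b/2 + u/(2*β)) - (a/2 + v/(2*β))) - b/(b-a)
        = ((u - β * b) - (v - β * (-a))) / (2*β*(b-a)) := by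
      field_simp
      ring
    rw [heq, abs_div, abs_of_pos (by positivity : (0:ℝ) < 2*β*(b-a))]
    gcongr
    rw [abs_le]
    constructor <;> linarith [hu.1, hu.2, hv.1, hv.2]
  constructor
  · rw [← tendsto_sub_nhds_zero_iff]
    have h1 : Tendsto (fun β : ℝ => 2 * β) atTop atTop :=
      tendsto_id.const_mul_atTop two_pos
    have h2 : Tendsto (fun β : ℝ => 2 * β * (b - a)) atTop atTop :=
      h1.atTop_mul_const hba
    have h0 : Tendsto (fun β : ℝ => Real.log 2 / (2 * β * (b - a))) atTop (𝓝 0) :=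
      Tendsto.div_atTop tendsto_const_nhds h2
    apply squeeze_zero_norm' _ h0
    filter_upwards [eventually_gt_atTop 0] with β hβ
    simpa [Real.norm_eq_abs] using key β hβ
  · intro β hβ
    refine (key β hβ).trans ?_
    gcongr
    nlinarith
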